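/- Let a₁, a₂ be natural numbers with a₂ > a₁ > 1, let k_X, l_X > 0, and suppose k = k* where k* = (1/(a₂ − a₁)) · (l_X/a₁)^{a₁} · ((a₁ − 1)/k_X)^{a₁ − 1}. Then x* := (l_X/(k a₁(a₂ − a₁)))^{1/(a₁ − 1)} is the unique zero of f(x) = k_X − l_X x + k(a₂ − a₁)x^{a₁} in (0, ∞), and moreover f(x*) = 0 and f'(x*) = 0 (so x* is a root of multiplicity at least two). -/

import Mathlib

/-- For `k = k*`, the steady-state function `f(x) = k_X - l_X x + k(a₂ - a₁)x^{a₁}` of the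
fully open network `0 ⇄ X, a₁X → a₂X` has the unique positive zero
`x* = (l_X/(k a₁(a₂ - a₁)))^{1/(a₁-1)}`, which is moreover a root of `f` of multiplicity
at least two: `f(x*) = 0` and `f'(x*) = 0`. -/
theorem unique_degenerate_steady_state_of_eq_kstar (a₁ a₂ : ℕ) (h1 : 1 < a₁) (h2 : a₁ < a₂)
    (kX lX k : ℝ) (hkX : 0 < kX) (hlX : 0 < lX) (hk : 0 < k)
    (hkeq : k = (1 / ((a₂ : ℝ) - (a₁ : ℝ))) * (lX / (a₁ : ℝ)) ^ a₁ *
      (((a₁ : ℝ) - 1) / kX) ^ (a₁ - 1)) :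
    (kX - lX * (lX / (k * (a₁ : ℝ) * ((a₂ : ℝ) - (a₁ : ℝ)))) ^ ((1 : ℝ) / ((a₁ : ℝ) - 1)) +
      k * ((a₂ : ℝ) - (a₁ : ℝ)) *
        ((lX / (k * (a₁ : ℝ) * ((a₂ : ℝ) - (a₁ : ℝ)))) ^ ((1 : ℝ) / ((a₁ : ℝ) - 1))) ^ a₁
      = 0) ∧
    deriv (fun x : ℝ => kX - lX * x + k * ((a₂ : ℝ) - (a₁ : ℝ)) * x ^ a₁)
      ((lX / (k * (a₁ : ℝ) * ((a₂ : ℝ) - (a₁ : ℝ)))) ^ ((1 : ℝ) / ((a₁ : ℝ) - 1))) = 0 ∧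
    (∀ x : ℝ, 0 < x → kX - lX * x + k * ((a₂ : ℝ) - (a₁ : ℝ)) * x ^ a₁ = 0 →
      x = (lX / (k * (a₁ : ℝ) * ((a₂ : ℝ) - (a₁ : ℝ)))) ^ ((1 : ℝ) / ((a₁ : ℝ) - 1))) := by
  obtain ⟨m, rfl⟩ : ∃ m, a₁ = m + 1 := ⟨a₁ - 1, by omega⟩
  have hm : 1 ≤ m := by omega
  have hmR : (1 : ℝ) ≤ (m : ℝ) := by exact_mod_cast hm
  have hmne : (m : ℝ) ≠ 0 := by positivity
  have hA : (0 : ℝ) < (a₂ : ℝ) - ((m : ℝ) + 1) := by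
    have : ((m : ℝ) + 1) < (a₂ : ℝ) := by exact_mod_cast h2
    linarith
  push_cast at hkeq ⊢
  try simp only [Nat.add_sub_cancel] at hkeq
  set A : ℝ := (a₂ : ℝ) - ((m : ℝ) + 1) with hAdef
  set t : ℝ := ((m : ℝ) + 1) * kX / ((m : ℝ) * lX) with htdef
  have ht : 0 < t := by positivity
  have hm11 : ((m : ℝ) + 1 - 1) = (m : ℝ) := by ring
  rw [hm11] at hkeq
  -- key identity
  have key : k * ((m : ℝ) + 1) * A * t ^ m = lX := by
    rw [hkeq, htdef]
    simp only [div_pow, mul_pow, pow_succ]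
    field_simp
  have key' : k * A * ((m : ℝ) + 1) * t ^ m = lX := by rw [← key]; ring
  have hb : lX / (k * ((m : ℝ) + 1) * A) = t ^ (m : ℕ) := by
    rw [← key]; field_simp
  have hexp : ((m : ℝ) + 1 - 1) = (m : ℝ) := by ring
  have hxs : (lX / (k * ((m : ℝ) + 1) * A)) ^ ((1 : ℝ) / ((m : ℝ) + 1 - 1)) = t := by
    rw [hexp, hb, ← Real.rpow_natCast t m, ← Real.rpow_mul ht.le]
    rw [mul_one_div, div_self hmne, Real.rpow_one]
  rw [hxs]
  have htl : t * ((m : ℝ) * lX) = ((m : ℝ) + 1) * kX := by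
    rw [htdef]; field_simp
  have hft : kX - lX * t + k * A * t ^ (m + 1) = 0 := by
    have h2' : k * A * t ^ (m + 1) * ((m : ℝ) + 1) = lX * t := by
      rw [pow_succ]; linear_combination t * key'
    have h3 : ((m : ℝ) + 1) * (kX - lX * t + k * A * t ^ (m + 1)) = 0 := by
      linear_combination h2' - htl
    have hne : ((m : ℝ) + 1) ≠ 0 := by positivity
    rcases mul_eq_zero.mp h3 with h | h
    · exact absurd h hne
    · exact h
  have hF' : ∀ x : ℝ, HasDerivAt (fun x : ℝ => kX - lX * x + k * A * x ^ (m + 1))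
      (k * A * ((m : ℝ) + 1) * x ^ m - lX) x := by
    intro x
    have h1 : HasDerivAt (fun x : ℝ => kX - lX * x) (-lX) x := by
      simpa using ((hasDerivAt_id x).const_mul lX).const_sub kX
    have h2 : HasDerivAt (fun x : ℝ => k * A * x ^ (m + 1))
        (k * A * (((m : ℝ) + 1) * x ^ m)) x := by
      have := (hasDerivAt_pow (m + 1) x).const_mul (k * A)
      simpa [Nat.add_sub_cancel] using this
    have := h1.add h2
    convert this using 1
    all_goals first | rfl | ring
  refine ⟨hft, ?_, ?_⟩
  · rw [(hF' t).deriv]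
    linarith [key']
  · -- uniqueness
    have hcont : Continuous (fun x : ℝ => kX - lX * x + k * A * x ^ (m + 1)) := by fun_prop
    have hanti : StrictAntiOn (fun x : ℝ => kX - lX * x + k * A * x ^ (m + 1)) (Set.Icc 0 t) := by
      apply strictAntiOn_of_deriv_neg (convex_Icc 0 t) hcont.continuousOn
      intro x hx
      rw [interior_Icc] at hx
      rw [(hF' x).deriv]
      have hxm : x ^ m < t ^ m := pow_lt_pow_left₀ hx.2 hx.1.le (by omega)
      have hc : (0 : ℝ) < k * A * ((m : ℝ) + 1) := by positivity
      have := mul_lt_mul_of_pos_left hxm hc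
      linarith [key']
    have hmono : StrictMonoOn (fun x : ℝ => kX - lX * x + k * A * x ^ (m + 1)) (Set.Ici t) := by
      apply strictMonoOn_of_deriv_pos (convex_Ici t) hcont.continuousOn
      intro x hx
      rw [interior_Ici] at hx
      rw [Set.mem_Ioi] at hx
      rw [(hF' x).deriv]
      have hxm : t ^ m < x ^ m := pow_lt_pow_left₀ hx ht.le (by omega)
      have hc : (0 : ℝ) < k * A * ((m : ℝ) + 1) := by positivity
      have := mul_lt_mul_of_pos_left hxm hc
      linarith [key']
    intro x hx hfx
    rcases lt_trichotomy x t with hlt | heq | hgt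
    · exfalso
      have := hanti ⟨hx.le, hlt.le⟩ ⟨le_refl 0 |>.trans ht.le, le_refl t⟩ hlt
      simp only [hft, hfx] at this
      exact lt_irrefl 0 this
    · exact heq
    · exfalso
      have := hmono (Set.self_mem_Ici) (Set.mem_Ici.mpr hgt.le) hgt
      simp only [hft, hfx] at this
      exact lt_irrefl 0 this
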